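/- arXiv:1102.3603 — 2 statements merged into one kernel-verified Lean document; each statement's English description precedes it below -/
import Mathlib

section
/- Let V be a nonempty finite type with n = Fintype.card V and E : Fin m → Sym2 V a decodable multigraph on V. Suppose (k^G_{m(G)} : ℤ) = m(G)·(n + 1) + n − 2m + 1. Let α be the number of vertices v with d_I(v) = m(G) and β the number of vertices v with d_I(v) ≥ m(G) + 2. Then β = 0, and either ((α : ℤ) = m(G)·(n + 1) + n − 2m and L_G = m(G)), or ((α : ℤ) = m(G)·(n + 1) + n − 2m + 1 and L_G = m(G) + 1). -/
open Finset


/-- `e` is a loop index at vertex `v`. -/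
def IsLoopIdx {V : Type*} {m : ℕ} (E : Fin m → Sym2 V) (v : V) (e : Fin m) : Prop :=
  E e = Sym2.diag v

/-- `u` and `v` are connected in the multigraph `E` with the edge indices in `S` deleted. -/
def ConnectedMod {V : Type*} {m : ℕ} (E : Fin m → Sym2 V) (S : Finset (Fin m))
    (u v : V) : Prop :=
  Relation.EqvGen (fun a b => ∃ e : Fin m, e ∉ S ∧ E e = s(a, b)) u v

/-- `G − S` is decodable: every vertex is connected in `G − S` to a vertex with a loop
outside `S`. -/
def DecodableMod {V : Type*} {m : ℕ} (E : Fin m → Sym2 V) (S : Finset (Fin m)) : Prop :=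
  ∀ u : V, ∃ v : V, (∃ e : Fin m, e ∉ S ∧ IsLoopIdx E v e) ∧ ConnectedMod E S u v

def IsDecodable {V : Type*} {m : ℕ} (E : Fin m → Sym2 V) : Prop :=
  DecodableMod E ∅

/-- `c_x^G`: the number of `x`-element sets of edge indices whose deletion leaves a
decodable graph. -/
noncomputable def cG {V : Type*} {m : ℕ} (E : Fin m → Sym2 V) (x : ℕ) : ℕ :=
  Set.ncard {S : Finset (Fin m) | S.card = x ∧ DecodableMod E S}

/-- `k_x^G = C(m,x) − c_x^G`. -/
noncomputable def kG {V : Type*} {m : ℕ} (E : Fin m → Sym2 V) (x : ℕ) : ℕ :=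
  Nat.choose m x - cG E x

/-- `m(G)`: the minimum cardinality of a loop cut. -/
noncomputable def mCut {V : Type*} {m : ℕ} (E : Fin m → Sym2 V) : ℕ :=
  sInf {k : ℕ | ∃ S : Finset (Fin m), S.card = k ∧ ¬ DecodableMod E S}

/-- incidence degree of `v` (a loop at `v` counts once). -/
noncomputable def dI {V : Type*} {m : ℕ} (E : Fin m → Sym2 V) (v : V) : ℕ :=
  Set.ncard {e : Fin m | v ∈ E e}

/-- `δ_I(G)`: the minimum incidence degree. -/
noncomputable def deltaI {V : Type*} {m : ℕ} (E : Fin m → Sym2 V) : ℕ :=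
  sInf (Set.range (dI E))

/-- `L_G`: the number of loop indices. -/
noncomputable def LG {V : Type*} {m : ℕ} (E : Fin m → Sym2 V) : ℕ :=
  Set.ncard {e : Fin m | ∃ v : V, E e = Sym2.diag v}

/-- `δ_ℓ(v)`: the number of loop indices at `v`. -/
noncomputable def loopsAt {V : Type*} {m : ℕ} (E : Fin m → Sym2 V) (v : V) : ℕ :=
  Set.ncard {e : Fin m | E e = Sym2.diag v}

/-- `Δ_ℓ(G)`: the maximum number of loops at a single vertex. -/
noncomputable def DeltaLoops {V : Type*} {m : ℕ} (E : Fin m → Sym2 V) : ℕ :=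
  sSup (Set.range (loopsAt E))

/-- `κ_G`: the edge connectivity. -/
noncomputable def kappaG {V : Type*} {m : ℕ} (E : Fin m → Sym2 V) : ℕ :=
  sInf {k : ℕ | ∃ S : Finset (Fin m), S.card = k ∧ ∃ u v : V, ¬ ConnectedMod E S u v}

section Aux
set_option linter.unusedSectionVars false
open scoped Classical

variable {V : Type*} [Fintype V] {m : ℕ} (E : Fin m → Sym2 V)

noncomputable def Iv (v : V) : Finset (Fin m) := univ.filter (fun e => v ∈ E e)
noncomputable def Tset : Finset (Fin m) := univ.filter (fun e => ∃ v, E e = Sym2.diag v)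
lemma mem_Iv {v : V} {e : Fin m} : e ∈ Iv E v ↔ v ∈ E e := by simp [Iv]
lemma mem_Tset {e : Fin m} : e ∈ Tset E ↔ ∃ v, E e = Sym2.diag v := by simp [Tset]

lemma dI_eq (v : V) : dI E v = (Iv E v).card := by
  rw [dI, Iv, ← Set.ncard_coe_finset]; congr 1; ext e; simp

lemma LG_eq : LG E = (Tset E).card := by
  rw [LG, Tset, ← Set.ncard_coe_finset]; congr 1; ext e; simp

lemma eqvgen_inv {α : Type*} {r : α → α → Prop} {P : α → Prop}
    (h : ∀ a b, r a b → (P a ↔ P b)) {a b : α} (hg : Relation.EqvGen r a b) :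
    P a ↔ P b := by
  induction hg with
  | rel a b hab => exact h a b hab
  | refl => rfl
  | symm a b _ ih => exact ih.symm
  | trans a b c _ _ ih1 ih2 => exact ih1.trans ih2

lemma undec_Iv (v : V) : ¬ DecodableMod E (Iv E v) := by
  intro h
  obtain ⟨w, ⟨e, heS, hl⟩, hconn⟩ := h v
  have key : ∀ a b, (∃ e : Fin m, e ∉ Iv E v ∧ E e = s(a, b)) → (a = v ↔ b = v) := by
    rintro a b ⟨e, heS, hE⟩
    constructor <;> rintro rfl <;>
      exact absurd ((mem_Iv E).mpr (by rw [hE]; simp)) heS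
  have hwv : w = v := (eqvgen_inv key hconn).mp rfl
  subst hwv
  exact heS ((mem_Iv E).mpr (by rw [hl]; exact Sym2.mem_iff.mpr (Or.inl rfl)))

lemma undec_T [Nonempty V] : ¬ DecodableMod E (Tset E) := by
  intro h
  obtain ⟨w, ⟨e, heS, hl⟩, -⟩ := h (Classical.arbitrary V)
  exact heS ((mem_Tset E).mpr ⟨w, hl⟩)

lemma mCut_le {S : Finset (Fin m)} (h : ¬ DecodableMod E S) : mCut E ≤ S.card :=
  Nat.sInf_le ⟨S, rfl, h⟩

lemma mCut_le_dI (v : V) : mCut E ≤ dI E v := by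
  rw [dI_eq]; exact mCut_le E (undec_Iv E v)

lemma mCut_le_LG [Nonempty V] : mCut E ≤ LG E := by
  rw [LG_eq]; exact mCut_le E (undec_T E)

lemma sym2_card (z : Sym2 V) :
    (univ.filter (fun v => v ∈ z)).card + (if ∃ w, z = Sym2.diag w then 1 else 0) = 2 := by
  induction z using Sym2.inductionOn with
  | hf a b =>
    have hf : univ.filter (fun v => v ∈ s(a,b)) = {a, b} := by
      ext v; simp [Sym2.mem_iff]
    rw [hf]
    by_cases hab : a = b
    · subst hab
      rw [if_pos ⟨a, rfl⟩]
      simp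
    · rw [if_neg, card_insert_of_notMem (by simp [hab]), card_singleton]
      rintro ⟨w, hw⟩
      rw [show Sym2.diag w = s(w,w) from rfl, Sym2.eq_iff] at hw
      rcases hw with ⟨rfl, rfl⟩ | ⟨rfl, rfl⟩ <;> exact hab rfl

lemma handshake : ∑ v : V, dI E v + LG E = 2 * m := by
  have h1 : ∑ v : V, dI E v = ∑ e : Fin m, (univ.filter (fun v => v ∈ E e)).card := by
    simp only [dI_eq, Iv, card_filter]
    rw [Finset.sum_comm]
  have h2 : LG E = ∑ e : Fin m, (if ∃ w, E e = Sym2.diag w then 1 else 0) := by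
    rw [LG_eq, Tset, card_filter]
  rw [h1, h2, ← Finset.sum_add_distrib]
  simp only [sym2_card]
  simp [mul_comm]

noncomputable def Uset (x : ℕ) : Finset (Finset (Fin m)) :=
  univ.filter (fun S => S.card = x ∧ ¬ DecodableMod E S)

lemma kG_eq (x : ℕ) : kG E x = (Uset E x).card := by
  have hc : cG E x
      = (univ.filter (fun S : Finset (Fin m) => S.card = x ∧ DecodableMod E S)).card := by
    rw [cG, ← Set.ncard_coe_finset]; congr 1; ext S; simp
  have hsplit : (univ.filter (fun S : Finset (Fin m) => S.card = x ∧ DecodableMod E S)).card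
      + (Uset E x).card = m.choose x := by
    rw [Uset]
    have h3 : (univ.filter (fun S : Finset (Fin m) => S.card = x)).card = m.choose x := by
      have : (univ.filter (fun S : Finset (Fin m) => S.card = x)) = powersetCard x univ := by
        ext S; simp [mem_powersetCard_univ]
      rw [this, card_powersetCard, card_univ, Fintype.card_fin]
    rw [← h3]
    have h4 := Finset.card_filter_add_card_filter_not
      (s := univ.filter (fun S : Finset (Fin m) => S.card = x))
      (p := fun S => DecodableMod E S)
    simp only [filter_filter] at h4
    convert h4 using 3
  rw [kG, hc, ← hsplit, Nat.add_sub_cancel_left]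

lemma Iv_inj (hdec : IsDecodable E) : Function.Injective (Iv E) := by
  intro u v h
  by_contra hne
  obtain ⟨w, ⟨e', -, hl⟩, hconn⟩ := hdec u
  have main : ∀ (e : Fin m) (x y : V), E e = s(x, y) → (x = u ∨ x = v) → (y = u ∨ y = v) := by
    rintro e x y hxy (rfl | rfl)
    · have h1 : e ∈ Iv E v := by
        rw [← h, mem_Iv, hxy]; exact Sym2.mem_iff.mpr (Or.inl rfl)
      have h2 : v ∈ s(x, y) := hxy ▸ (mem_Iv E).mp h1
      rcases Sym2.mem_iff.mp h2 with h3 | h3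
      · exact absurd h3.symm hne
      · exact Or.inr h3.symm
    · have h1 : e ∈ Iv E u := by
        rw [h, mem_Iv, hxy]; exact Sym2.mem_iff.mpr (Or.inl rfl)
      have h2 : u ∈ s(x, y) := hxy ▸ (mem_Iv E).mp h1
      rcases Sym2.mem_iff.mp h2 with h3 | h3
      · exact absurd h3 hne
      · exact Or.inl h3.symm
  have key : ∀ a b, (∃ e : Fin m, e ∉ (∅ : Finset (Fin m)) ∧ E e = s(a, b)) →
      ((a = u ∨ a = v) ↔ (b = u ∨ b = v)) := by
    rintro a b ⟨e, -, hE⟩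
    exact ⟨main e a b hE, main e b a (by rw [hE, Sym2.eq_swap])⟩
  have hw : w = u ∨ w = v := (eqvgen_inv key hconn).mp (Or.inl rfl)
  have he'w : e' ∈ Iv E w := (mem_Iv E).mpr (by rw [hl]; exact Sym2.mem_iff.mpr (Or.inl rfl))
  have hu : u ∈ E e' ∧ v ∈ E e' := by
    rcases hw with rfl | rfl
    · exact ⟨(mem_Iv E).mp he'w, (mem_Iv E).mp (h ▸ he'w)⟩
    · exact ⟨(mem_Iv E).mp (h.symm ▸ he'w), (mem_Iv E).mp he'w⟩
  rw [hl] at hu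
  have h4 : u = w := by rcases Sym2.mem_iff.mp hu.1 with h | h <;> exact h
  have h5 : v = w := by rcases Sym2.mem_iff.mp hu.2 with h | h <;> exact h
  exact hne (h4.trans h5.symm)

lemma subsingleton_of_T_eq_Iv (hdec : IsDecodable E) {v : V} (hTv : Tset E = Iv E v) :
    ∀ u : V, u = v := by
  intro u
  obtain ⟨w, ⟨e', -, hl⟩, hconn⟩ := hdec u
  have hwv : w = v := by
    have h1 : e' ∈ Tset E := (mem_Tset E).mpr ⟨w, hl⟩
    have h2 : v ∈ E e' := (mem_Iv E).mp (hTv ▸ h1)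
    rw [hl] at h2
    rcases Sym2.mem_iff.mp h2 with h | h <;> exact h.symm
  have main : ∀ (e : Fin m) (x y : V), E e = s(x, y) → x = v → y = v := by
    rintro e x y hxy rfl
    have h1 : e ∈ Tset E := by
      rw [hTv, mem_Iv, hxy]; exact Sym2.mem_iff.mpr (Or.inl rfl)
    obtain ⟨w', hw'⟩ := (mem_Tset E).mp h1
    rw [hxy, show Sym2.diag w' = s(w', w') from rfl, Sym2.eq_iff] at hw'
    rcases hw' with ⟨h2, h3⟩ | ⟨h2, h3⟩ <;> rw [h3, ← h2]
  have key : ∀ a b, (∃ e : Fin m, e ∉ (∅ : Finset (Fin m)) ∧ E e = s(a, b)) →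
      (a = v ↔ b = v) := by
    rintro a b ⟨e, -, hE⟩
    exact ⟨main e a b hE, main e b a (by rw [hE, Sym2.eq_swap])⟩
  exact (eqvgen_inv key hconn).mpr hwv

end Aux

theorem stmt11 {V : Type*} [Fintype V] [Nonempty V] {m : ℕ} (E : Fin m → Sym2 V)
    (hdec : IsDecodable E)
    (hk : (kG E (mCut E) : ℤ) =
      (mCut E : ℤ) * (Fintype.card V + 1) + Fintype.card V - 2 * m + 1) :
    Set.ncard {v : V | mCut E + 2 ≤ dI E v} = 0 ∧
      (((Set.ncard {v : V | dI E v = mCut E} : ℤ) =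
          (mCut E : ℤ) * (Fintype.card V + 1) + Fintype.card V - 2 * m ∧
        LG E = mCut E) ∨
       ((Set.ncard {v : V | dI E v = mCut E} : ℤ) =
          (mCut E : ℤ) * (Fintype.card V + 1) + Fintype.card V - 2 * m + 1 ∧
        LG E = mCut E + 1)) := by
  classical
  obtain ⟨μ, hμ⟩ : ∃ μ, mCut E = μ := ⟨_, rfl⟩
  obtain ⟨n, hn⟩ : ∃ n, Fintype.card V = n := ⟨_, rfl⟩
  set A : Finset V := univ.filter (fun v => dI E v = μ) with hA
  set B : Finset V := univ.filter (fun v => μ + 2 ≤ dI E v) with hB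
  have hαcard : Set.ncard {v : V | dI E v = mCut E} = A.card := by
    rw [← Set.ncard_coe_finset]; congr 1; ext v; simp [hA, hμ]
  have hβcard : Set.ncard {v : V | mCut E + 2 ≤ dI E v} = B.card := by
    rw [← Set.ncard_coe_finset]; congr 1; ext v; simp [hB, hμ]
  -- degree sum lower bound
  have hsum : (μ : ℤ) * n + ((n : ℤ) - A.card) + B.card ≤ 2 * m - LG E := by
    have h1 : (∑ v : V, (dI E v : ℤ)) = 2 * m - LG E := by
      have := handshake E
      have := congrArg (fun x : ℕ => (x : ℤ)) this
      push_cast at this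
      linarith
    have h2 : ∀ v ∈ (univ : Finset V),
        (μ : ℤ) + ((if dI E v = μ then (0:ℤ) else 1) + (if μ + 2 ≤ dI E v then (1:ℤ) else 0))
          ≤ (dI E v : ℤ) := by
      intro v _
      have hd : μ ≤ dI E v := hμ ▸ mCut_le_dI E v
      by_cases h : dI E v = μ
      · rw [if_pos h, if_neg (by omega)]; simp; omega
      · by_cases h' : μ + 2 ≤ dI E v
        · rw [if_neg h, if_pos h']; push_cast; omega
        · rw [if_neg h, if_neg h']; push_cast; omega
    have h3 := Finset.sum_le_sum h2
    rw [h1] at h3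
    have h4 : (∑ v : V, ((μ : ℤ) +
        ((if dI E v = μ then (0:ℤ) else 1) + (if μ + 2 ≤ dI E v then (1:ℤ) else 0))))
        = (μ : ℤ) * n + ((n : ℤ) - A.card) + B.card := by
      rw [Finset.sum_add_distrib, Finset.sum_add_distrib, Finset.sum_const, card_univ, hn]
      have e1 : (∑ v : V, (if dI E v = μ then (0:ℤ) else 1)) = (n : ℤ) - A.card := by
        have : (∑ v : V, (if dI E v = μ then (0:ℤ) else 1))
            = (univ.filter (fun v => ¬ dI E v = μ)).card := by
          rw [← Finset.sum_boole]
          congr 1; ext v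
          by_cases h : dI E v = μ <;> simp [h]
        rw [this]
        have := Finset.card_filter_add_card_filter_not
          (s := (univ : Finset V)) (p := fun v => dI E v = μ)
        rw [card_univ, hn] at this
        rw [← hA] at this
        push_cast
        omega
      have e2 : (∑ v : V, (if μ + 2 ≤ dI E v then (1:ℤ) else 0)) = (B.card : ℤ) := by
        rw [Finset.sum_boole, hB]
      rw [e1, e2]
      push_cast
      ring
    rw [h4] at h3
    exact h3
  have hLμ : μ ≤ LG E := hμ ▸ mCut_le_LG E
  -- upper bound: A.card ≤ k
  have hkval : kG E (mCut E) = (Uset E μ).card := by rw [hμ, kG_eq]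
  have hmaps : ∀ v ∈ A, Iv E v ∈ Uset E μ := by
    intro v hv
    rw [hA, mem_filter] at hv
    simp only [Uset, mem_filter, mem_univ, true_and]
    exact ⟨by rw [← dI_eq, hv.2], undec_Iv E v⟩
  have hAk : A.card ≤ (Uset E μ).card :=
    Finset.card_le_card_of_injOn _ hmaps (fun a _ b _ h => Iv_inj E hdec h)
  -- hypothesis restated
  have hk' : ((Uset E μ).card : ℤ) = (μ : ℤ) * (n + 1) + n - 2 * m + 1 := by
    rw [← hkval, hk, hμ, hn]
  by_cases hL : LG E = μ
  · -- loop set is a small cut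
    have hTU : Tset E ∈ Uset E μ := by
      simp only [Uset, mem_filter, mem_univ, true_and]
      exact ⟨by rw [← LG_eq, hL], undec_T E⟩
    by_cases hTim : ∃ v ∈ A, Iv E v = Tset E
    · -- degenerate: single vertex
      obtain ⟨v, -, hTv⟩ := hTim
      have hsub : ∀ u : V, u = v := subsingleton_of_T_eq_Iv E hdec hTv.symm
      have hn1 : n = 1 := by
        rw [← hn]; exact Fintype.card_eq_one_iff.mpr ⟨v, hsub⟩
      have hzdiag : ∀ z : Sym2 V, z = Sym2.diag v := by
        intro z
        induction z using Sym2.inductionOn with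
        | hf a b => rw [hsub a, hsub b]; rfl
      have hTuniv : Tset E = univ := by
        ext e; simp only [mem_Tset, mem_univ, iff_true]; exact ⟨v, hzdiag _⟩
      have hLm : LG E = m := by
        rw [LG_eq, hTuniv, card_univ, Fintype.card_fin]
      have hμm : μ = m := by omega
      have hcm : mCut E = m := hμ.trans hμm
      have hkle : kG E (mCut E) ≤ 1 := by
        rw [hcm]
        calc kG E m ≤ m.choose m := Nat.sub_le _ _
          _ = 1 := Nat.choose_self m
      exfalso
      have hint : ((kG E (mCut E)) : ℤ) ≤ 1 := by exact_mod_cast hkle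
      rw [hk, hμ, hμm, hn, hn1] at hint
      push_cast at hint
      linarith
    · -- Tset distinct from all Iv v, v ∈ A
      have hins : insert (Tset E) (A.image (Iv E)) ⊆ Uset E μ := by
        intro S hS
        rcases Finset.mem_insert.mp hS with rfl | hS
        · exact hTU
        · obtain ⟨v, hv, rfl⟩ := Finset.mem_image.mp hS
          exact hmaps v hv
      have hcard1 : A.card + 1 ≤ (Uset E μ).card := by
        have h5 : (insert (Tset E) (A.image (Iv E))).card = A.card + 1 := by
          rw [Finset.card_insert_of_notMem (by
            intro hmem
            obtain ⟨v, hv, hIv⟩ := Finset.mem_image.mp hmem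
            exact hTim ⟨v, hv, hIv⟩),
            Finset.card_image_of_injective _ (Iv_inj E hdec)]
        rw [← h5]
        exact Finset.card_le_card hins
      -- conclude: A.card = R, B.card = 0
      have hBz : B.card = 0 := by
        have h6 : (A.card : ℤ) + 1 ≤ (Uset E μ).card := by exact_mod_cast hcard1
        rw [hk'] at h6
        have h7 : (LG E : ℤ) = μ := by exact_mod_cast hL
        have hB0 : (B.card : ℤ) ≤ 0 := by linarith [hsum]
        exact_mod_cast le_antisymm hB0 (by positivity)
      refine ⟨by rw [hβcard, hBz], Or.inl ⟨?_, by rw [hL, hμ]⟩⟩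
      rw [hαcard, hμ, hn]
      have h6 : (A.card : ℤ) + 1 ≤ (Uset E μ).card := by exact_mod_cast hcard1
      rw [hk'] at h6
      have h7 : (LG E : ℤ) = μ := by exact_mod_cast hL
      have h8 : (B.card : ℤ) = 0 := by exact_mod_cast hBz
      linarith [hsum]
  · -- LG ≥ μ + 1
    have hL1 : μ + 1 ≤ LG E := by omega
    have h6 : (A.card : ℤ) ≤ (μ : ℤ) * (n + 1) + n - 2 * m + 1 := by
      rw [← hk']; exact_mod_cast hAk
    have h7 : (μ : ℤ) + 1 ≤ LG E := by exact_mod_cast hL1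
    have hBz : B.card = 0 := by
      have hB0 : (B.card : ℤ) ≤ 0 := by linarith [hsum]
      exact_mod_cast le_antisymm hB0 (by positivity)
    have h8 : (B.card : ℤ) = 0 := by exact_mod_cast hBz
    have hLeq : LG E = μ + 1 := by
      have h9 : (LG E : ℤ) ≤ (μ : ℤ) + 1 := by linarith [hsum]
      have h10 : LG E ≤ μ + 1 := by exact_mod_cast h9
      omega
    refine ⟨by rw [hβcard, hBz], Or.inr ⟨?_, by rw [hLeq, hμ]⟩⟩
    rw [hαcard, hμ, hn]
    have h11 : (LG E : ℤ) = (μ : ℤ) + 1 := by exact_mod_cast hLeq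
    linarith [hsum]
end

section
/- Let V be a nonempty finite type with n = Fintype.card V and E : Fin m → Sym2 V a decodable multigraph on V. Let α be the number of vertices v with d_I(v) = m(G) and β the number of vertices v with d_I(v) ≥ m(G) + 2. Then α + 2m ≥ L_G + n·m(G) + n + β. -/
lemma myNcardSetOf {α : Type*} [Fintype α] (p : α → Prop) [DecidablePred p] :
    {x | p x}.ncard = (Finset.univ.filter p).card := by
  rw [Set.ncard_eq_toFinset_card', Set.toFinset_setOf]

lemma myMCutLe {V : Type*} [Fintype V] {m : ℕ} (E : Fin m → Sym2 V) (v : V) :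
    mCut E ≤ dI E v := by
  classical
  set S := Finset.univ.filter (fun e => v ∈ E e) with hSdef
  have hcard : dI E v = S.card := myNcardSetOf _
  rw [hcard]
  apply Nat.sInf_le
  refine ⟨S, rfl, ?_⟩
  intro h
  obtain ⟨w, ⟨e, he, hloop⟩, hconn⟩ := h v
  have key : ∀ a b, Relation.EqvGen (fun a b => ∃ e : Fin m, e ∉ S ∧ E e = s(a, b)) a b →
      (a = v ↔ b = v) := by
    intro a b h
    induction h with
    | rel a b hr =>
      obtain ⟨e, he, hE⟩ := hr
      simp only [hSdef, Finset.mem_filter, Finset.mem_univ, true_and] at he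
      constructor
      · rintro rfl; exact absurd (by rw [hE]; exact Sym2.mem_mk_left _ _) he
      · rintro rfl; exact absurd (by rw [hE]; exact Sym2.mem_mk_right _ _) he
    | refl => exact Iff.rfl
    | symm _ _ _ ih => exact ih.symm
    | trans _ _ _ _ _ ih1 ih2 => exact ih1.trans ih2
  have hw : w = v := (key v w hconn).mp rfl
  subst hw
  simp only [hSdef, Finset.mem_filter, Finset.mem_univ, true_and] at he
  exact he (by rw [hloop, Sym2.diag]; exact Sym2.mem_mk_left _ _)

lemma myEdgeCount {V : Type*} [Fintype V] [DecidableEq V] (z : Sym2 V) :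
    (Finset.univ.filter (fun v => v ∈ z)).card
      + (if ∃ v : V, z = Sym2.diag v then 1 else 0) = 2 := by
  induction z using Sym2.inductionOn with
  | hf a b =>
    have h1 : (Finset.univ.filter (fun v => v ∈ (s(a, b) : Sym2 V))) = {a, b} := by
      ext x; simp [Sym2.mem_iff, eq_comm]
    have h2 : (∃ v : V, (s(a, b) : Sym2 V) = Sym2.diag v) ↔ a = b := by
      constructor
      · rintro ⟨v, hv⟩
        rw [Sym2.diag, Sym2.eq_iff] at hv
        rcases hv with ⟨rfl, rfl⟩ | ⟨rfl, rfl⟩ <;> rfl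
      · rintro rfl; exact ⟨a, rfl⟩
    rw [h1]
    by_cases hab : a = b
    · subst hab; simp [h2]
    · rw [Finset.card_insert_of_notMem (by simp [hab]), Finset.card_singleton]
      simp [h2, hab]

lemma mySumDeg {V : Type*} [Fintype V] [DecidableEq V] {m : ℕ} (E : Fin m → Sym2 V) :
    (∑ v : V, (Finset.univ.filter (fun e => v ∈ E e)).card)
      + (Finset.univ.filter (fun e => ∃ v : V, E e = Sym2.diag v)).card = 2 * m := by
  classical
  have h1 : ∑ v : V, (Finset.univ.filter (fun e => v ∈ E e)).card
      = ∑ e : Fin m, (Finset.univ.filter (fun v => v ∈ E e)).card := by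
    simp only [Finset.card_filter]
    rw [Finset.sum_comm]
  have h2 : (Finset.univ.filter (fun e => ∃ v : V, E e = Sym2.diag v)).card
      = ∑ e : Fin m, (if ∃ v : V, E e = Sym2.diag v then 1 else 0) := by
    exact Finset.card_filter _ _
  rw [h1, h2, ← Finset.sum_add_distrib]
  have : ∀ e : Fin m, (Finset.univ.filter (fun v => v ∈ E e)).card
      + (if ∃ v : V, E e = Sym2.diag v then 1 else 0) = 2 := fun e => myEdgeCount (E e)
  rw [Finset.sum_congr rfl (fun e _ => this e), Finset.sum_const, Finset.card_univ,
    Fintype.card_fin, smul_eq_mul, mul_comm]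

theorem stmt18 {V : Type*} [Fintype V] [Nonempty V] {m : ℕ} (E : Fin m → Sym2 V)
    (hdec : IsDecodable E) :
    Set.ncard {v : V | dI E v = mCut E} + 2 * m ≥
      LG E + Fintype.card V * mCut E + Fintype.card V +
        Set.ncard {v : V | mCut E + 2 ≤ dI E v} := by
  classical
  set n := Fintype.card V with hn
  set μ := mCut E with hmu
  have hle : ∀ v : V, μ ≤ dI E v := fun v => myMCutLe E v
  have hdI : ∀ v : V, dI E v = (Finset.univ.filter (fun e => v ∈ E e)).card :=
    fun v => myNcardSetOf _
  have hLG : LG E = (Finset.univ.filter (fun e => ∃ v : V, E e = Sym2.diag v)).card :=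
    myNcardSetOf _
  have hA : Set.ncard {v : V | dI E v = μ} = (Finset.univ.filter (fun v => dI E v = μ)).card :=
    myNcardSetOf _
  have hB : Set.ncard {v : V | μ + 2 ≤ dI E v}
      = (Finset.univ.filter (fun v => μ + 2 ≤ dI E v)).card := myNcardSetOf _
  have hsum : (∑ v : V, dI E v)
      + (Finset.univ.filter (fun e => ∃ v : V, E e = Sym2.diag v)).card = 2 * m := by
    rw [Finset.sum_congr rfl (fun v _ => hdI v)]
    exact mySumDeg E
  have hpoint : ∀ v : V,
      μ + ((if dI E v = μ then 0 else 1) + (if μ + 2 ≤ dI E v then 1 else 0)) ≤ dI E v := by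
    intro v
    have := hle v
    split_ifs <;> omega
  have hsum2 := Finset.sum_le_sum (fun v (_ : v ∈ Finset.univ) => hpoint v)
  rw [Finset.sum_add_distrib, Finset.sum_add_distrib, Finset.sum_const, Finset.card_univ,
    smul_eq_mul] at hsum2
  have e1 : ∑ v : V, (if dI E v = μ then 0 else 1)
      = (Finset.univ.filter (fun v => ¬ (dI E v = μ))).card := by
    rw [Finset.card_filter]
    exact Finset.sum_congr rfl (fun v _ => by split_ifs with h <;> simp [h]) 
  have e2 : ∑ v : V, (if μ + 2 ≤ dI E v then 1 else 0)
      = (Finset.univ.filter (fun v => μ + 2 ≤ dI E v)).card :=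
    (Finset.card_filter _ _).symm
  rw [e1, e2] at hsum2
  have e3 : (Finset.univ.filter (fun v => dI E v = μ)).card
      + (Finset.univ.filter (fun v => ¬ (dI E v = μ))).card = n := by
    rw [Finset.card_filter_add_card_filter_not, Finset.card_univ]
  rw [hA, hB, hLG]
  generalize (Finset.univ.filter (fun v => dI E v = μ)).card = a at e3 ⊢
  generalize (Finset.univ.filter (fun v => ¬ (dI E v = μ))).card = c at e3 hsum2
  generalize (Finset.univ.filter (fun v => μ + 2 ≤ dI E v)).card = b at hsum2 ⊢
  generalize (Finset.univ.filter (fun e => ∃ v : V, E e = Sym2.diag v)).card = L at hsum ⊢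
  generalize (∑ v : V, dI E v) = D at hsum hsum2
  generalize n * μ = P at hsum2 ⊢
  omega
end
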